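/- (Tucker decomposition of the joint probability tensor.) Let (Ω, F, P) be a probability space, let x : Ω → ℝ^k be a measurable random vector taking values in the probability simplex Δ^{k−1} = {x ∈ ℝ^k : x_h ≥ 0, Σ_h x_h = 1}, and let y_1, …, y_p be random variables with y_j taking values in {1,…,d_j}, mutually conditionally independent given σ(x), with P(y_j = c ∣ σ(x)) = Σ_{h=1}^k x_h φ_{jhc} almost surely for each j and each c ∈ {1,…,d_j}, where for each j and h the vector (φ_{jh1},…,φ_{jhd_j}) is a probability vector. Then for every c = (c_1,…,c_p) with c_j ∈ {1,…,d_j}: P(y_1 = c_1, …, y_p = c_p) = Σ_{h_1=1}^k ⋯ Σ_{h_p=1}^k g_{h_1,…,h_p} ∏_{j=1}^p φ_{j h_j c_j}, where g_{h_1,…,h_p} = E[ ∏_{j=1}^p x_{h_j} ]. -/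

import Mathlib

open MeasureTheory

/-- Tucker decomposition of the joint probability tensor:
`P(y₁ = c₁, …, y_p = c_p) = Σ_{h₁,…,h_p} g_{h₁…h_p} ∏_j φ_{j h_j c_j}` with
`g_{h₁…h_p} = E[∏_j x_{h_j}]`. -/
theorem tucker_decomposition
    {Ω : Type*} [MeasurableSpace Ω] (μ : Measure Ω) [IsProbabilityMeasure μ]
    (k p : ℕ) (d : Fin p → ℕ)
    (x : Ω → Fin k → ℝ) (hx : Measurable x)
    -- `x` takes values in the probability simplex `Δ^{k-1}`
    (hsimplex : ∀ ω, (∀ h, 0 ≤ x ω h) ∧ ∑ h, x ω h = 1)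
    (y : (j : Fin p) → Ω → Fin (d j)) (hy : ∀ j, Measurable (y j))
    (φ : (j : Fin p) → Fin k → Fin (d j) → ℝ)
    -- each `φ_{jh·}` is a probability vector
    (hφ : ∀ j h, (∀ c, 0 ≤ φ j h c) ∧ ∑ c, φ j h c = 1)
    -- conditional categorical distribution: `P(y_j = c ∣ σ(x)) = Σ_h x_h φ_{jhc}` a.s.
    (hcond : ∀ (j : Fin p) (c : Fin (d j)),
      μ[fun ω => if y j ω = c then (1 : ℝ) else 0 | (MeasurableSpace.comap x inferInstance)]
        =ᵐ[μ] fun ω => ∑ h, x ω h * φ j h c)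
    -- mutual conditional independence of `y₁,…,y_p` given `σ(x)`
    (hCI : ∀ f : (j : Fin p) → Fin (d j) → ℝ,
      μ[fun ω => ∏ j, f j (y j ω) | (MeasurableSpace.comap x inferInstance)]
        =ᵐ[μ] fun ω => ∏ j,
          ((μ[fun ω' => f j (y j ω') | (MeasurableSpace.comap x inferInstance)]) ω)) :
    ∀ c : (j : Fin p) → Fin (d j),
      (μ {ω | ∀ j, y j ω = c j}).toReal =
        ∑ h : Fin p → Fin k, (∫ ω, ∏ j, x ω (h j) ∂μ) * ∏ j, φ j (h j) (c j) := by
  intro c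
  have hm : MeasurableSpace.comap x (inferInstance : MeasurableSpace (Fin k → ℝ))
      ≤ ‹MeasurableSpace Ω› := hx.comap_le
  -- the indicator functions
  set f : (j : Fin p) → Fin (d j) → ℝ := fun j a => if a = c j then 1 else 0 with hf
  have hS : MeasurableSet {ω | ∀ j, y j ω = c j} := by
    have : {ω | ∀ j, y j ω = c j} = ⋂ j, (y j) ⁻¹' {c j} := by
      ext ω; simp [Set.mem_iInter]
    rw [this]
    exact MeasurableSet.iInter fun j => (hy j) (measurableSet_singleton (c j))
  -- bounds on x
  have hx01 : ∀ ω h, 0 ≤ x ω h ∧ x ω h ≤ 1 := by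
    intro ω h
    obtain ⟨hnn, hsum⟩ := hsimplex ω
    refine ⟨hnn h, ?_⟩
    calc x ω h ≤ ∑ h', x ω h' := Finset.single_le_sum (fun h' _ => hnn h') (Finset.mem_univ h)
    _ = 1 := hsum
  -- step 1 : probability as integral of product of indicators
  have step1 : (μ {ω | ∀ j, y j ω = c j}).toReal = ∫ ω, ∏ j, f j (y j ω) ∂μ := by
    rw [← measureReal_def, ← integral_indicator_one hS]
    congr 1
    ext ω
    rw [Set.indicator_apply]
    simp only [hf, Finset.prod_boole, Set.mem_setOf_eq, Finset.mem_univ, forall_true_left,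
      Pi.one_apply]
  -- step 2 : tower property
  have step2 : ∫ ω, ∏ j, f j (y j ω) ∂μ
      = ∫ ω, (μ[fun ω' => ∏ j, f j (y j ω') | MeasurableSpace.comap x inferInstance]) ω ∂μ :=
    (integral_condExp hm).symm
  -- step 3 : the conditional expectation a.e. equals the product of sums
  have step3 : (μ[fun ω' => ∏ j, f j (y j ω') | MeasurableSpace.comap x inferInstance])
      =ᵐ[μ] fun ω => ∏ j, ∑ h, x ω h * φ j (h) (c j) := by
    have h1 := hCI f
    have h2 : ∀ j : Fin p,
        (μ[fun ω' => f j (y j ω') | MeasurableSpace.comap x inferInstance]) =ᵐ[μ] fun ω => ∑ h, x ω h * φ j h (c j) := by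
      intro j
      have := hcond j (c j)
      simpa [hf] using this
    have h3 : ∀ᵐ ω ∂μ, ∀ j : Fin p,
        (μ[fun ω' => f j (y j ω') | MeasurableSpace.comap x inferInstance]) ω = ∑ h, x ω h * φ j h (c j) :=
      (ae_all_iff).2 h2
    filter_upwards [h1, h3] with ω hω1 hω3
    rw [hω1]
    exact Finset.prod_congr rfl fun j _ => hω3 j
  -- step 4 : put together
  have step4 : (μ {ω | ∀ j, y j ω = c j}).toReal
      = ∫ ω, ∏ j, ∑ h, x ω h * φ j h (c j) ∂μ := by
    rw [step1, step2]
    exact integral_congr_ae step3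
  rw [step4]
  -- step 5 : expand the product of sums
  have step5 : ∀ ω, (∏ j, ∑ h, x ω h * φ j h (c j))
      = ∑ h : Fin p → Fin k, (∏ j, x ω (h j)) * ∏ j, φ j (h j) (c j) := by
    intro ω
    rw [Finset.prod_univ_sum]
    exact Finset.sum_congr rfl fun h _ => (Finset.prod_mul_distrib)
  simp_rw [step5]
  -- step 6 : swap integral and sum
  have hint : ∀ h : Fin p → Fin k, Integrable (fun ω => ∏ j, x ω (h j)) μ := by
    intro h
    have hmeas : Measurable fun ω => ∏ j, x ω (h j) :=
      Finset.measurable_prod _ fun j _ => (measurable_pi_apply (h j)).comp hx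
    refine Integrable.mono' (integrable_const (1 : ℝ)) hmeas.aestronglyMeasurable ?_
    filter_upwards with ω
    rw [Real.norm_eq_abs, abs_of_nonneg (Finset.prod_nonneg fun j _ => (hx01 ω (h j)).1)]
    exact Finset.prod_le_one (fun j _ => (hx01 ω (h j)).1) (fun j _ => (hx01 ω (h j)).2)
  rw [integral_finset_sum _ fun h _ => (hint h).mul_const _]
  exact Finset.sum_congr rfl fun h _ => integral_mul_const _ _
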